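/- Let ε : W₁ → {±1} be the restriction to W₁ ≤ S_d of the sign character of S_d. Then N(Z(ε;p₁,…,p_d) ∗ Z(1_{W₂};p₁,…,p_d) ∗ ⋯ ∗ Z(1_{W_k};p₁,…,p_d)) equals the number of S_d-orbits on I₁×⋯×I_k whose stabilizer ω₁W₁ω₁⁻¹ ∩ ⋯ ∩ ω_kW_kω_k⁻¹ consists entirely of even permutations. -/

import Mathlib

open scoped Classical
open MvPolynomial

/-- The number `c_s(σ)` of cycles of length `s` in the cycle decomposition of `σ`
(fixed points counted as cycles of length 1). -/
def cyc {d : ℕ} (σ : Equiv.Perm (Fin d)) (s : ℕ) : ℕ :=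
  if s = 1 then d - σ.support.card else σ.cycleType.count s

/-- The monomial `p₁^{c₁(σ)} ⋯ p_d^{c_d(σ)}`, where the variable `X s` stands for the
power sum `p_{s+1}`. -/
noncomputable def cycMon {d : ℕ} (K : Type*) [Field K] (σ : Equiv.Perm (Fin d)) :
    MvPolynomial (Fin d) K :=
  ∏ s : Fin d, (X s : MvPolynomial (Fin d) K) ^ cyc σ ((s : ℕ) + 1)

/-- The characteristic map: `ch u = |S_d|⁻¹ Σ_ζ u(ζ) p₁^{c₁(ζ)}⋯p_d^{c_d(ζ)}`. -/
noncomputable def ch {d : ℕ} (K : Type*) [Field K] (u : Equiv.Perm (Fin d) → K) :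
    MvPolynomial (Fin d) K :=
  (Nat.card (Equiv.Perm (Fin d)) : K)⁻¹ • ∑ ζ : Equiv.Perm (Fin d), u ζ • cycMon K ζ

/-- The character of the induced representation `ind_W^{S_d}(χ)`. -/
noncomputable def indChar {d : ℕ} (K : Type*) [Field K]
    (W : Subgroup (Equiv.Perm (Fin d))) (χ : W →* Kˣ) : Equiv.Perm (Fin d) → K :=
  fun ζ => (Nat.card W : K)⁻¹ * ∑ g : Equiv.Perm (Fin d),
    if h : g⁻¹ * ζ * g ∈ W then (χ ⟨g⁻¹ * ζ * g, h⟩ : K) else 0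

/-- The generalized cycle index `Z(χ; p₁,…,p_d)`; it equals `ch (indChar χ)`. -/
noncomputable def Zind {d : ℕ} (K : Type*) [Field K]
    (W : Subgroup (Equiv.Perm (Fin d))) (χ : W →* Kˣ) : MvPolynomial (Fin d) K :=
  (Nat.card W : K)⁻¹ • ∑ σ : W, (χ σ : K) • cycMon K (σ : Equiv.Perm (Fin d))

/-- `z_σ = ∏_{s=1}^d s^{c_s(σ)} c_s(σ)!`. -/
def zval {d : ℕ} (σ : Equiv.Perm (Fin d)) : ℕ :=
  ∏ s ∈ Finset.Icc 1 d, s ^ (cyc σ s) * (cyc σ s).factorial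

def IsLeftTransversal {G : Type*} [Group G] (W : Subgroup G) (I : Set G) : Prop :=
  ∀ g : G, ∃! i : I, (i : G)⁻¹ * g ∈ W



lemma sum_sgn_stab {G : Type*} [Group G] [Fintype G] {K : Type*} [Field K] [CharZero K]
    (sgn : G →* ℤˣ) (H : Finset G) (h1 : (1:G) ∈ H)
    (hmul : ∀ a ∈ H, ∀ b ∈ H, a * b ∈ H) :
    (∑ ζ ∈ H, ((sgn ζ : ℤ) : K)) =
      if ∀ ζ ∈ H, sgn ζ = 1 then (H.card : K) else 0 := by
  split_ifs with h
  · have h' : ∀ ζ ∈ H, ((sgn ζ : ℤ) : K) = 1 := by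
      intro ζ hζ; rw [h ζ hζ]; norm_num
    rw [Finset.sum_congr rfl h', Finset.sum_const, nsmul_eq_mul, mul_one]
  · push_neg at h
    obtain ⟨ζ₀, hζ₀H, hζ₀⟩ := h
    have hinv : ∀ a ∈ H, a⁻¹ ∈ H := by
      intro a ha
      have hpow : ∀ n : ℕ, 0 < n → a ^ n ∈ H := by
        intro n hn; induction n with
        | zero => omega
        | succ n ih =>
          rcases Nat.eq_zero_or_pos n with h0 | h0
          · simpa [h0] using ha
          · rw [pow_succ]; exact hmul _ (ih h0) _ ha
      have hn : 0 < orderOf a := orderOf_pos a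
      have heq : a ^ (orderOf a - 1) * a = 1 := by
        rw [← pow_succ, Nat.sub_add_cancel hn, pow_orderOf_eq_one]
      have hh := eq_inv_of_mul_eq_one_left heq
      rcases Nat.eq_zero_or_pos (orderOf a - 1) with h0 | h0
      · have ha1 : a = 1 := by
          have := heq; rw [h0, pow_zero, one_mul] at this; exact this
        simpa [ha1] using h1
      · rw [← hh]; exact hpow _ h0
    have hsgnζ₀ : (sgn ζ₀ : ℤ) = -1 := by
      rcases Int.units_eq_one_or (sgn ζ₀) with h' | h'
      · exact absurd h' hζ₀
      · rw [h']; rfl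
    have key : (∑ ζ ∈ H, ((sgn ζ : ℤ) : K)) = -∑ ζ ∈ H, ((sgn ζ : ℤ) : K) := by
      rw [← Finset.sum_neg_distrib]
      refine Finset.sum_nbij' (fun ζ => ζ₀ * ζ) (fun ζ => ζ₀⁻¹ * ζ) ?_ ?_ ?_ ?_ ?_
      · intro a ha; exact hmul _ hζ₀H _ ha
      · intro a ha; exact hmul _ (hinv _ hζ₀H) _ ha
      · intro a _; group
      · intro a _; group
      · intro a _
        rw [map_mul]
        push_cast [hsgnζ₀]
        ring
    linear_combination key / 2

lemma burnside {G P : Type*} [Group G] [Fintype G] [Fintype P] [DecidableEq P]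
    (act : G →* Equiv.Perm P) (sgn : G →* ℤˣ) {K : Type*} [Field K] [CharZero K]
    (T : Finset P) (hT : ∀ p : P, ∃! ω, ω ∈ T ∧ ∃ ζ, act ζ ω = p) :
    ∑ ζ : G, ((sgn ζ : ℤ) : K) * ((Finset.univ.filter (fun p => act ζ p = p)).card : K)
    = (Fintype.card G : K) *
      ((T.filter (fun ω => ∀ ζ : G, act ζ ω = ω → sgn ζ = 1)).card : K) := by
  classical
  set St : P → Finset G := fun p => Finset.univ.filter (fun ζ : G => act ζ p = p) with hSt
  set A : P → K := fun p => ∑ ζ ∈ St p, ((sgn ζ : ℤ) : K) with hA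
  -- Step 1: swap sums
  have step1 : ∑ ζ : G, ((sgn ζ : ℤ) : K) *
      ((Finset.univ.filter (fun p => act ζ p = p)).card : K) = ∑ p : P, A p := by
    have e1 : ∀ ζ : G, ((sgn ζ : ℤ) : K) * ((Finset.univ.filter (fun p => act ζ p = p)).card : K)
        = ∑ p : P, if act ζ p = p then ((sgn ζ : ℤ) : K) else 0 := by
      intro ζ
      rw [Finset.sum_ite, Finset.sum_const, Finset.sum_const_zero, add_zero, nsmul_eq_mul,
        mul_comm]
    rw [Finset.sum_congr rfl (fun ζ _ => e1 ζ), Finset.sum_comm]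
    refine Finset.sum_congr rfl (fun p _ => ?_)
    rw [hA, hSt]
    simp [Finset.sum_filter]
  rw [step1]
  -- A is constant on orbits
  have hAconst : ∀ (ω : P) (ζ₀ : G), A (act ζ₀ ω) = A ω := by
    intro ω ζ₀
    rw [hA]
    refine Finset.sum_nbij' (fun ζ => ζ₀⁻¹ * ζ * ζ₀) (fun ζ => ζ₀ * ζ * ζ₀⁻¹) ?_ ?_ ?_ ?_ ?_
    · intro a ha
      simp only [hSt, Finset.mem_filter, Finset.mem_univ, true_and] at ha ⊢
      have := ha
      calc act (ζ₀⁻¹ * a * ζ₀) ω = act ζ₀⁻¹ (act a (act ζ₀ ω)) := by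
            simp [map_mul, Equiv.Perm.mul_apply]
        _ = ω := by rw [this, ← Equiv.Perm.mul_apply, ← map_mul, inv_mul_cancel, map_one,
            Equiv.Perm.one_apply]
    · intro a ha
      simp only [hSt, Finset.mem_filter, Finset.mem_univ, true_and] at ha ⊢
      calc act (ζ₀ * a * ζ₀⁻¹) (act ζ₀ ω) = act ζ₀ (act a ω) := by
            simp [map_mul, Equiv.Perm.mul_apply]
        _ = act ζ₀ ω := by rw [ha]
    · intro a _; group
    · intro a _; group
    · intro a _
      rw [map_mul, map_mul, map_inv]
      push_cast
      rcases Int.units_eq_one_or (sgn ζ₀) with h' | h' <;> rcases Int.units_eq_one_or (sgn a) with h'' | h'' <;>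
        simp [h', h'']
  -- Step 3: partition into orbits
  have step3 : ∑ p : P, A p = ∑ ω ∈ T,
      ((Finset.univ.filter (fun p : P => ∃ ζ : G, act ζ ω = p)).card : K) * A ω := by
    have e2 : ∀ p : P, A p = ∑ ω ∈ T, if (∃ ζ : G, act ζ ω = p) then A p else 0 := by
      intro p
      obtain ⟨ω₀, ⟨hω₀T, hω₀⟩, huniq⟩ := hT p
      rw [Finset.sum_eq_single ω₀]
      · simp [hω₀]
      · intro ω hωT hne
        rw [if_neg]
        intro hex
        exact hne (huniq ω ⟨hωT, hex⟩)
      · intro h; exact absurd hω₀T h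
    rw [Finset.sum_congr rfl (fun p _ => e2 p), Finset.sum_comm]
    refine Finset.sum_congr rfl (fun ω hω => ?_)
    rw [Finset.sum_ite, Finset.sum_const_zero, add_zero]
    have : ∀ p ∈ Finset.univ.filter (fun p : P => ∃ ζ : G, act ζ ω = p), A p = A ω := by
      intro p hp
      simp only [Finset.mem_filter, Finset.mem_univ, true_and] at hp
      obtain ⟨ζ, rfl⟩ := hp
      exact hAconst ω ζ
    rw [Finset.sum_congr rfl this, Finset.sum_const, nsmul_eq_mul]
  rw [step3]
  -- orbit-stabilizer
  have orbstab : ∀ ω : P,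
      (Finset.univ.filter (fun p : P => ∃ ζ : G, act ζ ω = p)).card * (St ω).card
        = Fintype.card G := by
    intro ω
    have hfib : ∀ p ∈ Finset.univ.filter (fun p : P => ∃ ζ : G, act ζ ω = p),
        (Finset.univ.filter (fun ζ : G => act ζ ω = p)).card = (St ω).card := by
      intro p hp
      simp only [Finset.mem_filter, Finset.mem_univ, true_and] at hp
      obtain ⟨ζ₀, rfl⟩ := hp
      refine Finset.card_nbij' (fun ζ => ζ₀⁻¹ * ζ) (fun ζ => ζ₀ * ζ) ?_ ?_ ?_ ?_
      · intro a ha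
        simp only [Finset.mem_coe, Finset.mem_filter, Finset.mem_univ, true_and, hSt] at ha ⊢
        rw [map_mul, Equiv.Perm.mul_apply, ha, ← Equiv.Perm.mul_apply, ← map_mul,
          inv_mul_cancel, map_one, Equiv.Perm.one_apply]
      · intro a ha
        simp only [Finset.mem_coe, Finset.mem_filter, Finset.mem_univ, true_and, hSt] at ha ⊢
        rw [map_mul, Equiv.Perm.mul_apply, ha]
      · intro a _; group
      · intro a _; group
    conv_rhs => rw [← Finset.card_univ (α := G),
      Finset.card_eq_sum_card_fiberwise (f := fun ζ : G => act ζ ω)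
        (t := Finset.univ.filter (fun p : P => ∃ ζ : G, act ζ ω = p))
        (fun ζ _ => by simp),
      Finset.sum_congr rfl hfib, Finset.sum_const, smul_eq_mul]
  -- Step 5: evaluate A ω via sum_sgn_stab
  have hAval : ∀ ω : P, A ω = if ∀ ζ : G, act ζ ω = ω → sgn ζ = 1 then ((St ω).card : K)
      else 0 := by
    intro ω
    simp only [hA]
    rw [sum_sgn_stab sgn (St ω) (by simp [hSt]) ?_]
    · congr 1
      simp only [hSt, Finset.mem_filter, Finset.mem_univ, true_and, eq_iff_iff]
    · intro a ha b hb
      simp only [hSt, Finset.mem_filter, Finset.mem_univ, true_and] at ha hb ⊢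
      rw [map_mul, Equiv.Perm.mul_apply, hb, ha]
  -- combine
  rw [Finset.sum_congr rfl (fun ω hω => by rw [hAval ω])]
  rw [Finset.sum_congr rfl (fun ω hω => (mul_ite _ _ _ _ : _ = _)), Finset.sum_ite,
    Finset.sum_congr rfl (fun ω hω => (mul_zero _ : _ = _)), Finset.sum_const_zero, add_zero]
  have : ∀ ω ∈ T.filter (fun ω => ∀ ζ : G, act ζ ω = ω → sgn ζ = 1),
      ((Finset.univ.filter (fun p : P => ∃ ζ : G, act ζ ω = p)).card : K) * ((St ω).card : K)
        = (Fintype.card G : K) := by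
    intro ω _
    rw [← Nat.cast_mul, orbstab ω]
  rw [Finset.sum_congr rfl this, Finset.sum_const, nsmul_eq_mul, mul_comm]

lemma eval_ch {d : ℕ} (K : Type*) [Field K] (u : Equiv.Perm (Fin d) → K) :
    MvPolynomial.eval (fun _ => (1:K)) (ch K u)
      = (Nat.card (Equiv.Perm (Fin d)) : K)⁻¹ * ∑ ζ : Equiv.Perm (Fin d), u ζ := by
  unfold ch cycMon
  rw [MvPolynomial.smul_eq_C_mul, map_mul, MvPolynomial.eval_C, map_sum]
  congr 1
  refine Finset.sum_congr rfl fun ζ _ => ?_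
  rw [MvPolynomial.smul_eq_C_mul, map_mul, MvPolynomial.eval_C]
  simp

lemma fix_iff {G : Type*} [Group G] (W : Subgroup G) (I : Set G)
    (hI : IsLeftTransversal W I) (s : G →* Equiv.Perm I)
    (hs : ∀ (ζ : G) (i : I), ((s ζ i : G))⁻¹ * ζ * i ∈ W) (ζ : G) (i : I) :
    s ζ i = i ↔ (i : G)⁻¹ * ζ * i ∈ W := by
  constructor
  · intro h; have := hs ζ i; rwa [h] at this
  · intro h
    obtain ⟨j, _, huniq⟩ := hI (ζ * i)
    have h1 : (((s ζ i) : G))⁻¹ * (ζ * i) ∈ W := by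
      have := hs ζ i; rwa [mul_assoc] at this
    have h2 : (i : G)⁻¹ * (ζ * i) ∈ W := by rwa [mul_assoc] at h
    exact (huniq _ h1).trans (huniq _ h2).symm

lemma card_conj {G : Type*} [Group G] [Fintype G] (W : Subgroup G) (I : Set G)
    (hI : IsLeftTransversal W I) (s : G →* Equiv.Perm I)
    (hs : ∀ (ζ : G) (i : I), ((s ζ i : G))⁻¹ * ζ * i ∈ W) (ζ : G) :
    (Finset.univ.filter (fun g : G => g⁻¹ * ζ * g ∈ W)).card
      = Nat.card W * (Finset.univ.filter (fun i : I => s ζ i = i)).card := by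
  classical
  set rep : G → I := fun g => (hI g).choose with hrep
  have hrep1 : ∀ g : G, ((rep g : G))⁻¹ * g ∈ W := fun g => (hI g).choose_spec.1
  have hrep2 : ∀ (g : G) (j : I), (j : G)⁻¹ * g ∈ W → j = rep g :=
    fun g => (hI g).choose_spec.2
  have hmapsto : ∀ g ∈ Finset.univ.filter (fun g : G => g⁻¹ * ζ * g ∈ W),
      rep g ∈ Finset.univ.filter (fun i : I => s ζ i = i) := by
    intro g hg
    simp only [Finset.mem_filter, Finset.mem_univ, true_and] at hg ⊢
    rw [fix_iff W I hI s hs]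
    -- (rep g)⁻¹ ζ (rep g) = w (g⁻¹ ζ g) w⁻¹ where w = (rep g)⁻¹ g ∈ W
    have hw := hrep1 g
    have : (rep g : G)⁻¹ * ζ * (rep g : G) =
        ((rep g : G)⁻¹ * g) * (g⁻¹ * ζ * g) * ((rep g : G)⁻¹ * g)⁻¹ := by group
    rw [this]
    exact W.mul_mem (W.mul_mem hw hg) (W.inv_mem hw)
  rw [Finset.card_eq_sum_card_fiberwise hmapsto]
  have hfib : ∀ i ∈ Finset.univ.filter (fun i : I => s ζ i = i),
      ((Finset.univ.filter (fun g : G => g⁻¹ * ζ * g ∈ W)).filter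
        (fun g => rep g = i)).card = Nat.card W := by
    intro i hi
    simp only [Finset.mem_filter, Finset.mem_univ, true_and] at hi
    have hifix : (i : G)⁻¹ * ζ * i ∈ W := (fix_iff W I hI s hs ζ i).mp hi
    rw [Nat.card_eq_fintype_card, Fintype.card_subtype]
    refine Finset.card_nbij' (fun g => (i : G)⁻¹ * g) (fun w => (i : G) * w) ?_ ?_ ?_ ?_
    · intro g hg
      simp only [Finset.mem_coe, Finset.mem_filter, Finset.mem_univ, true_and] at hg ⊢
      obtain ⟨-, hrg⟩ := hg
      rw [← hrg]
      exact hrep1 g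
    · intro w hw
      simp only [Finset.mem_coe, Finset.mem_filter, Finset.mem_univ, true_and] at hw ⊢
      constructor
      · have : ((i:G) * w)⁻¹ * ζ * ((i:G) * w)
            = w⁻¹ * ((i:G)⁻¹ * ζ * (i:G)) * w := by group
        rw [this]
        exact W.mul_mem (W.mul_mem (W.inv_mem hw) hifix) hw
      · refine (hrep2 _ i ?_).symm
        have : (i:G)⁻¹ * ((i:G) * w) = w := by group
        rw [this]; exact hw
    · intro g _; group
    · intro w _; group
  rw [Finset.sum_congr rfl hfib, Finset.sum_const, smul_eq_mul, mul_comm]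

lemma indChar_eq {d : ℕ} (K : Type*) [Field K] [CharZero K]
    (W : Subgroup (Equiv.Perm (Fin d))) (χ : W →* Kˣ)
    (I : Set (Equiv.Perm (Fin d))) (hI : IsLeftTransversal W I)
    (s : Equiv.Perm (Fin d) →* Equiv.Perm I)
    (hs : ∀ (ζ : Equiv.Perm (Fin d)) (i : I), ((s ζ i : Equiv.Perm (Fin d)))⁻¹ * ζ * i ∈ W)
    (f : Equiv.Perm (Fin d) → K)
    (hf : ∀ g ζ : Equiv.Perm (Fin d), f (g⁻¹ * ζ * g) = f ζ)
    (hχ : ∀ (x : Equiv.Perm (Fin d)) (h : x ∈ W), (χ ⟨x, h⟩ : K) = f x)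
    (ζ : Equiv.Perm (Fin d)) :
    indChar K W χ ζ = f ζ * ((Finset.univ.filter (fun i : I => s ζ i = i)).card : K) := by
  unfold indChar
  have e1 : ∀ g : Equiv.Perm (Fin d),
      (if h : g⁻¹ * ζ * g ∈ W then (χ ⟨g⁻¹ * ζ * g, h⟩ : K) else 0)
        = if g⁻¹ * ζ * g ∈ W then f ζ else 0 := by
    intro g
    split_ifs with h
    · rw [hχ _ h, hf]
    · rfl
  rw [Finset.sum_congr rfl (fun g _ => e1 g), Finset.sum_ite, Finset.sum_const,
    Finset.sum_const_zero, add_zero, nsmul_eq_mul, card_conj W I hI s hs ζ]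
  have hW0 : (Nat.card W : K) ≠ 0 := by
    simp [Nat.card_eq_fintype_card, Fintype.card_ne_zero]
  rw [Nat.cast_mul, ← mul_assoc, ← mul_assoc, inv_mul_cancel₀ hW0, one_mul, mul_comm]
  congr

def pact {k : ℕ} {G : Type*} [Group G] {I : Fin k → Set G}
    (s : ∀ m, G →* Equiv.Perm (I m)) : G →* Equiv.Perm (∀ m, I m) where
  toFun ζ := Equiv.piCongrRight fun m => s m ζ
  map_one' := by
    ext ω m
    simp
  map_mul' a b := by
    ext ω m
    simp [Equiv.Perm.mul_apply]

lemma pact_apply {k : ℕ} {G : Type*} [Group G] {I : Fin k → Set G}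
    (s : ∀ m, G →* Equiv.Perm (I m)) (ζ : G) (ω : ∀ m, I m) (m : Fin k) :
    pact s ζ ω m = s m ζ (ω m) := rfl

lemma pact_fix_iff {k : ℕ} {G : Type*} [Group G] {I : Fin k → Set G}
    (s : ∀ m, G →* Equiv.Perm (I m)) (ζ : G) (ω : ∀ m, I m) :
    pact s ζ ω = ω ↔ ∀ m, s m ζ (ω m) = ω m := by
  rw [funext_iff]
  rfl

/-- if `ε : W₁ → {±1}` is the restriction of the sign character of `S_d`,
then `N(Z(ε)∗Z(1_{W₂})∗⋯∗Z(1_{W_k}))` equals the number of `S_d`-orbits on `I₁×⋯×I_k`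
whose stabilizer `ω₁W₁ω₁⁻¹ ∩ ⋯ ∩ ω_kW_kω_k⁻¹` consists of even permutations. -/
theorem stmt18 (d k : ℕ) (hk : 0 < k) (K : Type*) [Field K] [IsAlgClosed K] [CharZero K]
    (W : Fin k → Subgroup (Equiv.Perm (Fin d))) (χ : ∀ m, W m →* Kˣ)
    (hsgn : ∀ w : W ⟨0, hk⟩, (χ ⟨0, hk⟩ w : K) =
      ((Equiv.Perm.sign ((w : Equiv.Perm (Fin d))) : ℤ) : K))
    (htriv : ∀ m : Fin k, m ≠ ⟨0, hk⟩ → χ m = 1)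
    (I : Fin k → Set (Equiv.Perm (Fin d))) (hI : ∀ m, IsLeftTransversal (W m) (I m))
    (s : ∀ m, Equiv.Perm (Fin d) →* Equiv.Perm (I m))
    (hs : ∀ m (ζ : Equiv.Perm (Fin d)) (i : I m),
      ((s m ζ i : Equiv.Perm (Fin d)))⁻¹ * ζ * i ∈ W m)
    (T : Finset (∀ m, I m))
    (hT : ∀ i : ∀ m, I m, ∃! ω, ω ∈ T ∧ ∃ ζ : Equiv.Perm (Fin d), ∀ m, s m ζ (ω m) = i m) :
    MvPolynomial.eval (fun _ => (1 : K))
        (ch K (fun ζ => ∏ m, indChar K (W m) (χ m) ζ)) =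
      ((T.filter (fun ω =>
        ∀ ζ ∈ ⨅ m, (W m).map (MulAut.conj ((ω m : Equiv.Perm (Fin d)))).toMonoidHom,
          Equiv.Perm.sign ζ = 1)).card : K) := by
  classical
  rw [eval_ch]
  -- rewrite the product of induced characters
  have hprod : ∀ ζ : Equiv.Perm (Fin d), (∏ m, indChar K (W m) (χ m) ζ) =
      ((Equiv.Perm.sign ζ : ℤ) : K) *
        ((Finset.univ.filter (fun ω : ∀ m, I m => pact s ζ ω = ω)).card : K) := by
    intro ζ
    have hF : ∀ m : Fin k, indChar K (W m) (χ m) ζ =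
        (if m = ⟨0, hk⟩ then ((Equiv.Perm.sign ζ : ℤ) : K) else 1) *
          ((Finset.univ.filter (fun i : I m => s m ζ i = i)).card : K) := by
      intro m
      by_cases hm0 : m = ⟨0, hk⟩
      · rw [hm0, if_pos rfl]
        refine indChar_eq K (W ⟨0, hk⟩) (χ ⟨0, hk⟩) (I ⟨0, hk⟩) (hI ⟨0, hk⟩) (s ⟨0, hk⟩)
          (hs ⟨0, hk⟩) (fun ζ => ((Equiv.Perm.sign ζ : ℤ) : K)) ?_ ?_ ζ
        · intro g ζ'
          show ((Equiv.Perm.sign (g⁻¹ * ζ' * g) : ℤ) : K) = ((Equiv.Perm.sign ζ' : ℤ) : K)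
          rw [map_mul, map_mul, map_inv]
          push_cast
          rcases Int.units_eq_one_or (Equiv.Perm.sign g) with h' | h' <;>
            rcases Int.units_eq_one_or (Equiv.Perm.sign ζ') with h'' | h'' <;>
            simp [h', h'']
        · intro x h
          exact hsgn ⟨x, h⟩
      · rw [if_neg hm0]
        refine indChar_eq K (W m) (χ m) (I m) (hI m) (s m) (hs m) (fun _ => 1)
          (fun _ _ => rfl) ?_ ζ
        intro x h
        rw [htriv m hm0]
        simp
    rw [Finset.prod_congr rfl (fun m _ => hF m), Finset.prod_mul_distrib]
    congr 1
    · rw [Finset.prod_eq_single (⟨0, hk⟩ : Fin k)]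
      · rw [if_pos rfl]
      · intro m _ hm0; rw [if_neg hm0]
      · intro h; exact absurd (Finset.mem_univ _) h
    · rw [← Nat.cast_prod]
      congr 1
      have hpi : (Finset.univ.filter (fun ω : ∀ m, I m => pact s ζ ω = ω)) =
          Fintype.piFinset (fun m => Finset.univ.filter (fun i : I m => s m ζ i = i)) := by
        ext ω
        simp only [Finset.mem_filter, Finset.mem_univ, true_and, Fintype.mem_piFinset,
          pact_fix_iff]
      rw [hpi, Fintype.card_piFinset]
  rw [Finset.sum_congr rfl (fun ζ _ => hprod ζ)]
  have hT' : ∀ p : ∀ m, I m, ∃! ω, ω ∈ T ∧ ∃ ζ : Equiv.Perm (Fin d), pact s ζ ω = p := by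
    intro p
    obtain ⟨ω₀, ⟨hω₀T, ζ₀, hζ₀⟩, huniq⟩ := hT p
    refine ⟨ω₀, ⟨hω₀T, ζ₀, ?_⟩, ?_⟩
    · funext m; exact hζ₀ m
    · rintro ω ⟨hωT, ζ, hζ⟩
      exact huniq ω ⟨hωT, ζ, fun m => congrFun hζ m⟩
  rw [burnside (pact s) Equiv.Perm.sign T hT']
  have hGpos : ((Fintype.card (Equiv.Perm (Fin d)) : K)) ≠ 0 := by
    exact_mod_cast Nat.cast_ne_zero.mpr Fintype.card_ne_zero
  rw [Nat.card_eq_fintype_card, ← mul_assoc, inv_mul_cancel₀ hGpos, one_mul]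
  -- identify the two filters
  have hcond : ∀ ω ∈ T, (∀ ζ : Equiv.Perm (Fin d), pact s ζ ω = ω → Equiv.Perm.sign ζ = 1) ↔
      (∀ ζ ∈ ⨅ m, (W m).map (MulAut.conj ((ω m : Equiv.Perm (Fin d)))).toMonoidHom,
        Equiv.Perm.sign ζ = 1) := by
    intro ω _
    have hmem : ∀ ζ : Equiv.Perm (Fin d),
        (ζ ∈ ⨅ m, (W m).map (MulAut.conj ((ω m : Equiv.Perm (Fin d)))).toMonoidHom) ↔
          pact s ζ ω = ω := by
      intro ζ
      rw [Subgroup.mem_iInf, pact_fix_iff]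
      refine forall_congr' fun m => ?_
      rw [fix_iff (W m) (I m) (hI m) (s m) (hs m), Subgroup.mem_map]
      constructor
      · rintro ⟨w, hw, rfl⟩
        have : ((ω m : Equiv.Perm (Fin d)))⁻¹ *
            ((MulAut.conj ((ω m : Equiv.Perm (Fin d)))).toMonoidHom w) * (ω m) = w := by
          simp [MulAut.conj_apply]
          group
        rw [this]; exact hw
      · intro h
        refine ⟨_, h, ?_⟩
        simp [MulAut.conj_apply]
        group
    constructor
    · intro h ζ hζ; exact h ζ ((hmem ζ).mp hζ)
    · intro h ζ hζ; exact h ζ ((hmem ζ).mpr hζ)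
  rw [Finset.filter_congr hcond]
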